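/- Let W be a finite subgroup of the orthogonal group of ℝⁿ whose only fixed vector is 0, and let ϖ ∈ ℝⁿ be a vector whose orbit {w·ϖ : w ∈ W} spans ℝⁿ. Then the convex hull conv(W·ϖ) has nonempty interior; moreover, the convex function u(y) := max_{w∈W} ⟨ϖ, w·y⟩ satisfies ∂u(0) = conv(W·ϖ), and consequently for every neighborhood U of 0 the set ⋃_{x∈U} ∂u(x) has positive Lebesgue measure (so u is not a generalized Alexandrov solution of the homogeneous Monge–Ampère equation det D²u = 0 on any neighborhood of 0). -/

import Mathlib

open MeasureTheory RealInnerProductSpace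
open scoped ENNReal

noncomputable section

abbrev Euc (n : ℕ) := EuclideanSpace ℝ (Fin n)

/-- Let `W` be a finite group of linear isometries of `ℝⁿ` whose only
fixed vector is `0`, and let `ϖ ∈ ℝⁿ` have orbit spanning `ℝⁿ`. Then `conv(W·ϖ)` has
nonempty interior, the convex function `u(y) = max_{w∈W} ⟨ϖ, w y⟩` satisfies
`∂u(0) = conv(W·ϖ)`, and for every neighborhood `U` of `0` the set `⋃_{x∈U} ∂u(x)` has
positive Lebesgue measure (so `u` is not a generalized Alexandrov solution of
`det D²u = 0` on any neighborhood of `0`). -/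
theorem stmt12 (n : ℕ) (W : Subgroup (Euc n ≃ₗᵢ[ℝ] Euc n)) (hWfin : Finite W)
    (hfix : ∀ x : Euc n, (∀ g ∈ W, g x = x) → x = 0)
    (ϖ : Euc n)
    (hspan : Submodule.span ℝ {y : Euc n | ∃ g ∈ W, g ϖ = y} = ⊤)
    (u : Euc n → ℝ)
    (hu : ∀ y : Euc n, IsGreatest {t : ℝ | ∃ g ∈ W, t = ⟪ϖ, g y⟫} (u y)) :
    (interior (convexHull ℝ {y : Euc n | ∃ g ∈ W, g ϖ = y})).Nonempty ∧
    {p : Euc n | ∀ y : Euc n, u 0 + ⟪p, y - 0⟫ ≤ u y} =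
      convexHull ℝ {y : Euc n | ∃ g ∈ W, g ϖ = y} ∧
    ∀ U ∈ nhds (0 : Euc n),
      0 < volume (⋃ x ∈ U, {p : Euc n | ∀ y : Euc n, u x + ⟪p, y - x⟫ ≤ u y}) := by
  classical
  have _ : Fintype W := Fintype.ofFinite _
  set S : Set (Euc n) := {y : Euc n | ∃ g ∈ W, g ϖ = y} with hSdef
  have hSϖ : ϖ ∈ S := ⟨1, W.one_mem, rfl⟩
  -- u 0 = 0
  have hu0 : u 0 = 0 := by
    obtain ⟨⟨g, hg, hval⟩, -⟩ := hu 0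
    simpa using hval
  -- key: ⟪g ϖ, y⟫ ≤ u y for g ∈ W
  have hkey : ∀ g ∈ W, ∀ y : Euc n, ⟪g ϖ, y⟫ ≤ u y := by
    intro g hg y
    have h1 : ⟪g ϖ, y⟫ = ⟪ϖ, g.symm y⟫ := by
      conv_lhs => rw [show y = g (g.symm y) by simp]
      exact g.inner_map_map ϖ (g.symm y)
    refine (hu y).2 ⟨g⁻¹, W.inv_mem hg, ?_⟩
    rw [h1, LinearIsometryEquiv.coe_inv]
  -- u y is realized: ∃ g ∈ W, u y = ⟪g ϖ, y⟫
  have hreal : ∀ y : Euc n, ∃ g ∈ W, u y = ⟪g ϖ, y⟫ := by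
    intro y
    obtain ⟨⟨g, hg, hval⟩, -⟩ := hu y
    refine ⟨g⁻¹, W.inv_mem hg, ?_⟩
    rw [LinearIsometryEquiv.coe_inv, hval]
    simpa using g.inner_map_map (g.symm ϖ) y
  -- the subdifferential at 0 equals conv S
  have hsub : {p : Euc n | ∀ y : Euc n, u 0 + ⟪p, y - 0⟫ ≤ u y} = convexHull ℝ S := by
    apply Set.Subset.antisymm
    · intro p hp
      by_contra hpc
      have hSfin : S.Finite := by
        have : S = (fun g : W => (g : Euc n ≃ₗᵢ[ℝ] Euc n) ϖ) '' Set.univ := by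
          ext y
          simp [hSdef, SetLike.exists]
        rw [this]
        exact (Set.finite_univ).image _
      obtain ⟨f, c, hfs, hfp⟩ := geometric_hahn_banach_closed_point
        (convex_convexHull ℝ S) (hSfin.isCompact_convexHull (𝕜 := ℝ)).isClosed hpc
      set v := (InnerProductSpace.toDual ℝ (Euc n)).symm f with hv
      have hfv : ∀ x : Euc n, ⟪v, x⟫ = f x := fun x => InnerProductSpace.toDual_symm_apply
      obtain ⟨g, hg, hgu⟩ := hreal v
      have h1 : u v < c := by
        rw [hgu, real_inner_comm, hfv]
        exact hfs _ (subset_convexHull ℝ S ⟨g, hg, rfl⟩)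
      have h2 : ⟪p, v⟫ ≤ u v := by
        have := hp v
        simpa [hu0] using this
      rw [real_inner_comm, hfv] at h2
      linarith
    · apply convexHull_min
      · rintro p ⟨g, hg, rfl⟩ y
        simpa [hu0] using hkey g hg y
      · intro p hp q hq a b ha hb hab
        intro y
        simp only [hu0, zero_add, sub_zero] at *
        have := hp y
        have := hq y
        rw [inner_add_left, real_inner_smul_left, real_inner_smul_left]
        calc a * ⟪p, y⟫ + b * ⟪q, y⟫ ≤ a * u y + b * u y :=
              add_le_add (mul_le_mul_of_nonneg_left (hp y) ha)
                (mul_le_mul_of_nonneg_left (hq y) hb)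
          _ = u y := by rw [← add_mul, hab, one_mul]
  -- sum of orbit is 0
  have hsum : ∑ g : W, (g : Euc n ≃ₗᵢ[ℝ] Euc n) ϖ = 0 := by
    apply hfix
    intro h hh
    rw [map_sum]
    exact Fintype.sum_equiv (Equiv.mulLeft (⟨h, hh⟩ : W)) _ _ (fun g => rfl)
  -- every orbit point lies in the vector span of S
  have horbit : ∀ g ∈ W, g ϖ ∈ vectorSpan ℝ S := by
    intro g hg
    have hmem : ∀ h : W, g ϖ - (h : Euc n ≃ₗᵢ[ℝ] Euc n) ϖ ∈ vectorSpan ℝ S := fun h =>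
      vsub_mem_vectorSpan ℝ ⟨g, hg, rfl⟩ ⟨h, h.2, rfl⟩
    have hsum2 : ∑ h : W, (g ϖ - (h : Euc n ≃ₗᵢ[ℝ] Euc n) ϖ)
        = (Fintype.card W : ℝ) • g ϖ := by
      rw [Finset.sum_sub_distrib, hsum, sub_zero, Finset.sum_const, Finset.card_univ]
      exact (Nat.cast_smul_eq_nsmul ℝ _ _).symm
    have hmem2 : (Fintype.card W : ℝ) • g ϖ ∈ vectorSpan ℝ S :=
      hsum2 ▸ Submodule.sum_mem _ (fun h _ => hmem h)
    have hmem3 := Submodule.smul_mem _ ((Fintype.card W : ℝ))⁻¹ hmem2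
    rwa [inv_smul_smul₀ (by exact_mod_cast Fintype.card_pos.ne')] at hmem3
  have hvs : vectorSpan ℝ S = ⊤ := top_le_iff.mp
    (hspan ▸ Submodule.span_le.mpr (by rintro _ ⟨g, hg, rfl⟩; exact horbit g hg))
  have haff : affineSpan ℝ S = ⊤ :=
    (AffineSubspace.affineSpan_eq_top_iff_vectorSpan_eq_top_of_nonempty ℝ _ _ ⟨ϖ, hSϖ⟩).mpr hvs
  have hconvaff : affineSpan ℝ (convexHull ℝ S) = ⊤ := by
    rw [affineSpan_convexHull, haff]
  have hint : (interior (convexHull ℝ S)).Nonempty :=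
    ((convex_convexHull ℝ S).interior_nonempty_iff_affineSpan_eq_top).mpr hconvaff
  refine ⟨hint, hsub, ?_⟩
  intro U hU
  have h0 : (0 : Euc n) ∈ U := mem_of_mem_nhds hU
  have hss : interior (convexHull ℝ S) ⊆
      ⋃ x ∈ U, {p : Euc n | ∀ y : Euc n, u x + ⟪p, y - x⟫ ≤ u y} := by
    refine interior_subset.trans ?_
    rw [← hsub]
    exact Set.subset_iUnion₂ (s := fun x (_ : x ∈ U) =>
      {p : Euc n | ∀ y : Euc n, u x + ⟪p, y - x⟫ ≤ u y}) (0 : Euc n) h0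
  exact lt_of_lt_of_le (isOpen_interior.measure_pos volume hint) (measure_mono hss)
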